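/- arXiv:0903.5282 — 3 statements merged into one kernel-verified Lean document; each statement's English description precedes it below -/
import Mathlib

section
/- Fix γ > 0 and positive rewards R_{A1}, R_{A2}, R_{B1}, R_{B2}. Define G: ℝ^4 → ℝ^4 by G(q)_{A1} = R_{A1} e^{q_{B2}/γ}/(e^{q_{B1}/γ}+e^{q_{B2}/γ}), G(q)_{A2} = R_{A2} e^{q_{B1}/γ}/(e^{q_{B1}/γ}+e^{q_{B2}/γ}), G(q)_{B1} = R_{B1} e^{q_{A2}/γ}/(e^{q_{A1}/γ}+e^{q_{A2}/γ}), G(q)_{B2} = R_{B2} e^{q_{A1}/γ}/(e^{q_{A1}/γ}+e^{q_{A2}/γ}). If max_{i,j} R_{ij} < 2γ, then G is a contraction on ℝ^4 (with the Euclidean norm) and hence has a unique fixed point, i.e., the stationary equations Q_{ij} = R_{ij} e^{Q_{i⁻j⁻}/γ}/(e^{Q_{i⁻j}/γ}+e^{Q_{i⁻j⁻}/γ}) have a unique solution. -/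
/-- The stationary map of the Q-learning dynamics. Coordinates:
`0 = A1`, `1 = A2`, `2 = B1`, `3 = B2`. -/
noncomputable def stationaryMap (γ RA1 RA2 RB1 RB2 : ℝ)
    (q : EuclideanSpace ℝ (Fin 4)) : EuclideanSpace ℝ (Fin 4) :=
  WithLp.toLp 2 ![RA1 * Real.exp (q 3 / γ) / (Real.exp (q 2 / γ) + Real.exp (q 3 / γ)),
    RA2 * Real.exp (q 2 / γ) / (Real.exp (q 2 / γ) + Real.exp (q 3 / γ)),
    RB1 * Real.exp (q 1 / γ) / (Real.exp (q 0 / γ) + Real.exp (q 1 / γ)),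
    RB2 * Real.exp (q 0 / γ) / (Real.exp (q 0 / γ) + Real.exp (q 1 / γ))]

noncomputable def sig (t : ℝ) : ℝ := Real.exp t / (1 + Real.exp t)

lemma sig_hasDerivAt (x : ℝ) :
    HasDerivAt sig (Real.exp x / (1 + Real.exp x) ^ 2) x := by
  have h1 : HasDerivAt (fun t => Real.exp t) (Real.exp x) x := Real.hasDerivAt_exp x
  have h2 : HasDerivAt (fun t => 1 + Real.exp t) (Real.exp x) x := h1.const_add 1
  have hne : (1 + Real.exp x) ≠ 0 := by positivity
  have := h1.div h2 hne
  exact this.congr_deriv (by ring)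

lemma sig_lip : LipschitzWith (4⁻¹ : NNReal) sig := by
  apply lipschitzWith_of_nnnorm_deriv_le (fun x => (sig_hasDerivAt x).differentiableAt)
  intro x
  rw [(sig_hasDerivAt x).deriv, ← NNReal.coe_le_coe, coe_nnnorm, Real.norm_eq_abs]
  have he : 0 < Real.exp x := Real.exp_pos x
  rw [abs_of_nonneg (by positivity)]
  rw [div_le_iff₀ (by positivity)]
  push_cast
  nlinarith [sq_nonneg (1 - Real.exp x)]

lemma sig_dist (a b : ℝ) : |sig a - sig b| ≤ |a - b| / 4 := by
  have := sig_lip.dist_le_mul a b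
  rw [Real.dist_eq, Real.dist_eq] at this
  push_cast at this
  linarith

lemma sig_eq (γ a b : ℝ) :
    Real.exp (b / γ) / (Real.exp (a / γ) + Real.exp (b / γ)) = sig (b / γ - a / γ) := by
  unfold sig
  rw [Real.exp_sub]
  have h1 : 0 < Real.exp (a / γ) := Real.exp_pos _
  have h2 : 0 < Real.exp (b / γ) := Real.exp_pos _
  field_simp

lemma coord_bound (γ Rm R a b a' b' : ℝ) (hγ : 0 < γ) (hR : 0 < R) (hRm : R ≤ Rm) :
    (R * Real.exp (b / γ) / (Real.exp (a / γ) + Real.exp (b / γ)) -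
     R * Real.exp (b' / γ) / (Real.exp (a' / γ) + Real.exp (b' / γ))) ^ 2
    ≤ Rm ^ 2 / (16 * γ ^ 2) * 2 * ((a - a') ^ 2 + (b - b') ^ 2) := by
  have h1 : R * Real.exp (b / γ) / (Real.exp (a / γ) + Real.exp (b / γ))
      = R * sig (b / γ - a / γ) := by
    rw [mul_div_assoc, sig_eq]
  have h2 : R * Real.exp (b' / γ) / (Real.exp (a' / γ) + Real.exp (b' / γ))
      = R * sig (b' / γ - a' / γ) := by
    rw [mul_div_assoc, sig_eq]
  rw [h1, h2, ← mul_sub]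
  have key : |sig (b / γ - a / γ) - sig (b' / γ - a' / γ)|
      ≤ (|a - a'| + |b - b'|) / (4 * γ) := by
    refine (sig_dist _ _).trans ?_
    have : b / γ - a / γ - (b' / γ - a' / γ) = ((b - b') - (a - a')) / γ := by ring
    rw [this, abs_div, abs_of_pos hγ, div_div,
      div_le_div_iff₀ (by positivity) (by positivity)]
    have h3 : |b - b' - (a - a')| ≤ |b - b'| + |a - a'| := abs_sub _ _
    nlinarith [abs_nonneg (a - a'), abs_nonneg (b - b')]
  have habs : |R * (sig (b / γ - a / γ) - sig (b' / γ - a' / γ))|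
      ≤ Rm * ((|a - a'| + |b - b'|) / (4 * γ)) := by
    rw [abs_mul, abs_of_pos hR]
    have hs : |sig (b / γ - a / γ) - sig (b' / γ - a' / γ)| ≥ 0 := abs_nonneg _
    calc R * |sig (b / γ - a / γ) - sig (b' / γ - a' / γ)|
        ≤ Rm * |sig (b / γ - a / γ) - sig (b' / γ - a' / γ)| := by nlinarith
      _ ≤ Rm * ((|a - a'| + |b - b'|) / (4 * γ)) := by
          apply mul_le_mul_of_nonneg_left key (by linarith)
  calc (R * (sig (b / γ - a / γ) - sig (b' / γ - a' / γ))) ^ 2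
      = |R * (sig (b / γ - a / γ) - sig (b' / γ - a' / γ))| ^ 2 := (sq_abs _).symm
    _ ≤ (Rm * ((|a - a'| + |b - b'|) / (4 * γ))) ^ 2 := by
        apply pow_le_pow_left₀ (abs_nonneg _) habs
    _ = Rm ^ 2 / (16 * γ ^ 2) * (|a - a'| + |b - b'|) ^ 2 := by
        field_simp
        ring
    _ ≤ Rm ^ 2 / (16 * γ ^ 2) * (2 * ((a - a') ^ 2 + (b - b') ^ 2)) := by
        have h4 : (|a - a'| + |b - b'|) ^ 2 ≤ 2 * ((a - a') ^ 2 + (b - b') ^ 2) := by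
          nlinarith [sq_abs (a - a'), sq_abs (b - b'), sq_nonneg (|a - a'| - |b - b'|),
            abs_nonneg (a - a'), abs_nonneg (b - b')]
        exact mul_le_mul_of_nonneg_left h4 (by positivity)
    _ = Rm ^ 2 / (16 * γ ^ 2) * 2 * ((a - a') ^ 2 + (b - b') ^ 2) := by ring

theorem stationary_map_contraction (γ RA1 RA2 RB1 RB2 : ℝ) (hγ : 0 < γ)
    (hA1 : 0 < RA1) (hA2 : 0 < RA2) (hB1 : 0 < RB1) (hB2 : 0 < RB2)
    (hbound : max (max RA1 RA2) (max RB1 RB2) < 2 * γ) :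
    (∃ K : NNReal, K < 1 ∧ LipschitzWith K (stationaryMap γ RA1 RA2 RB1 RB2)) ∧
    (∃! q : EuclideanSpace ℝ (Fin 4), stationaryMap γ RA1 RA2 RB1 RB2 q = q) := by
  set G := stationaryMap γ RA1 RA2 RB1 RB2 with hG
  set Rm : ℝ := max (max RA1 RA2) (max RB1 RB2) with hRmdef
  have hRA1 : RA1 ≤ Rm := le_trans (le_max_left _ _) (le_max_left _ _)
  have hRA2 : RA2 ≤ Rm := le_trans (le_max_right _ _) (le_max_left _ _)
  have hRB1 : RB1 ≤ Rm := le_trans (le_max_left _ _) (le_max_right _ _)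
  have hRB2 : RB2 ≤ Rm := le_trans (le_max_right _ _) (le_max_right _ _)
  set K : ℝ := Rm / (2 * γ) with hKdef
  have hRmpos : 0 < Rm := lt_of_lt_of_le hA1 hRA1
  have hK0 : 0 ≤ K := by positivity
  have hK1 : K < 1 := by
    rw [hKdef, div_lt_one (by positivity)]
    exact hbound
  have hdist : ∀ q q' : EuclideanSpace ℝ (Fin 4), dist (G q) (G q') ≤ K * dist q q' := by
    intro q q'
    rw [EuclideanSpace.dist_eq, EuclideanSpace.dist_eq]
    have hsum : ∑ i, dist (G q i) (G q' i) ^ 2 ≤ K ^ 2 * ∑ i, dist (q i) (q' i) ^ 2 := by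
      rw [Fin.sum_univ_four, Fin.sum_univ_four]
      have c0 := coord_bound γ Rm RA1 (q 2) (q 3) (q' 2) (q' 3) hγ hA1 hRA1
      have c1 := coord_bound γ Rm RA2 (q 3) (q 2) (q' 3) (q' 2) hγ hA2 hRA2
      have c2 := coord_bound γ Rm RB1 (q 0) (q 1) (q' 0) (q' 1) hγ hB1 hRB1
      have c3 := coord_bound γ Rm RB2 (q 1) (q 0) (q' 1) (q' 0) hγ hB2 hRB2
      have e23 : Real.exp (q 3 / γ) + Real.exp (q 2 / γ)
          = Real.exp (q 2 / γ) + Real.exp (q 3 / γ) := add_comm _ _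
      have e23' : Real.exp (q' 3 / γ) + Real.exp (q' 2 / γ)
          = Real.exp (q' 2 / γ) + Real.exp (q' 3 / γ) := add_comm _ _
      have e01 : Real.exp (q 1 / γ) + Real.exp (q 0 / γ)
          = Real.exp (q 0 / γ) + Real.exp (q 1 / γ) := add_comm _ _
      have e01' : Real.exp (q' 1 / γ) + Real.exp (q' 0 / γ)
          = Real.exp (q' 0 / γ) + Real.exp (q' 1 / γ) := add_comm _ _
      rw [e23, e23'] at c1
      rw [e01, e01'] at c3
      have hKsq : K ^ 2 = Rm ^ 2 / (16 * γ ^ 2) * 4 := by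
        rw [hKdef]
        field_simp
        ring
      simp only [hG, stationaryMap, WithLp.ofLp_toLp, Real.dist_eq, Matrix.cons_val_zero, Matrix.cons_val_one,
        Matrix.head_cons, Matrix.cons_val_two, Matrix.tail_cons, Matrix.cons_val_three,
        Matrix.cons_val_fin_one, sq_abs]
      rw [hKsq]
      linarith [c0, c1, c2, c3]
    calc Real.sqrt (∑ i, dist (G q i) (G q' i) ^ 2)
        ≤ Real.sqrt (K ^ 2 * ∑ i, dist (q i) (q' i) ^ 2) := Real.sqrt_le_sqrt hsum
      _ = K * Real.sqrt (∑ i, dist (q i) (q' i) ^ 2) := by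
          rw [Real.sqrt_mul (sq_nonneg K), Real.sqrt_sq hK0]
  set K' : NNReal := K.toNNReal with hK'def
  have hcoe : (K' : ℝ) = K := Real.coe_toNNReal K hK0
  have hlip : LipschitzWith K' G := LipschitzWith.of_dist_le_mul (by rw [hcoe]; exact hdist)
  have hK'1 : K' < 1 := by
    rw [← NNReal.coe_lt_coe, hcoe]
    exact hK1
  have hc : ContractingWith K' G := ⟨hK'1, hlip⟩
  refine ⟨⟨K', hK'1, hlip⟩, hc.fixedPoint G, hc.fixedPoint_isFixedPt, fun y hy => hc.fixedPoint_unique hy⟩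
end

section
/- Fix γ > 0 and rewards 0 < R_{ij} < 2γ for i ∈ {A,B}, j ∈ {1,2}. Let q(t) be a solution of the ODE q̇ = G(q) − q, where G is the stationary map defined from the Boltzmann exploration probabilities. Then V(t) = ‖G(q(t)) − q(t)‖² satisfies dV/dt ≤ 0 along trajectories, and dV/dt < 0 whenever G(q(t)) ≠ q(t). -/
private lemma absmul_bound (c A v : ℝ) (hA : 0 ≤ A) (hAc : A ≤ c) :
    A * v ≤ c * |v| :=
  le_trans (mul_le_mul_of_nonneg_left (le_abs_self v) hA)
    (mul_le_mul_of_nonneg_right hAc (abs_nonneg v))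

private lemma core_bound (c A1 A2 B1 B2 u0 u1 u2 u3 : ℝ) (hc : 0 ≤ c)
    (hA1 : 0 ≤ A1) (hA1c : A1 ≤ c) (hA2 : 0 ≤ A2) (hA2c : A2 ≤ c)
    (hB1 : 0 ≤ B1) (hB1c : B1 ≤ c) (hB2 : 0 ≤ B2) (hB2c : B2 ≤ c) :
    A1*(u0*(u3-u2)) + A2*(u1*(u2-u3)) + B1*(u2*(u1-u0)) + B2*(u3*(u0-u1))
      ≤ 2*c*(u0^2+u1^2+u2^2+u3^2) := by
  have h1 := absmul_bound c A1 (u0*(u3-u2)) hA1 hA1c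
  have h2 := absmul_bound c A2 (u1*(u2-u3)) hA2 hA2c
  have h3 := absmul_bound c B1 (u2*(u1-u0)) hB1 hB1c
  have h4 := absmul_bound c B2 (u3*(u0-u1)) hB2 hB2c
  have hT : |u0*(u3-u2)| + |u1*(u2-u3)| + |u2*(u1-u0)| + |u3*(u0-u1)|
      ≤ 2*(u0^2+u1^2+u2^2+u3^2) := by
    rw [abs_mul, abs_mul, abs_mul, abs_mul]
    have t1 : |u3-u2| ≤ |u3| + |u2| := abs_sub u3 u2
    have t2 : |u2-u3| ≤ |u2| + |u3| := abs_sub u2 u3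
    have t3 : |u1-u0| ≤ |u1| + |u0| := abs_sub u1 u0
    have t4 : |u0-u1| ≤ |u0| + |u1| := abs_sub u0 u1
    have n0 := abs_nonneg u0; have n1 := abs_nonneg u1
    have n2 := abs_nonneg u2; have n3 := abs_nonneg u3
    have s0 : |u0|^2 = u0^2 := sq_abs u0
    have s1 : |u1|^2 = u1^2 := sq_abs u1
    have s2 : |u2|^2 = u2^2 := sq_abs u2
    have s3 : |u3|^2 = u3^2 := sq_abs u3
    nlinarith [sq_nonneg (|u0| - |u2|), sq_nonneg (|u0| - |u3|),
      sq_nonneg (|u1| - |u2|), sq_nonneg (|u1| - |u3|),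
      mul_le_mul_of_nonneg_left t1 n0, mul_le_mul_of_nonneg_left t2 n1,
      mul_le_mul_of_nonneg_left t3 n2, mul_le_mul_of_nonneg_left t4 n3]
  have h5 := mul_le_mul_of_nonneg_left hT hc
  linarith

private lemma quarter_bound (x y : ℝ) (hx : 0 < x) (hy : 0 < y) :
    x * y / (x + y) ^ 2 ≤ 1 / 4 := by
  rw [div_le_iff₀ (by positivity)]
  nlinarith [sq_nonneg (x - y)]

private lemma half_bound (R γ a : ℝ) (hR : 0 < R) (hR' : R < 2 * γ) (hγ : 0 < γ)
    (ha : 0 < a) (ha4 : a ≤ 1 / 4) : R * a / γ < 1 / 2 := by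
  rw [div_lt_iff₀ hγ]
  nlinarith

private lemma wrap_le (S Q c : ℝ) (hc : 0 ≤ c) (hch : c < 1/2) (hQ : 0 ≤ Q)
    (hS : S ≤ 2*c*Q) : 2*(S - Q) ≤ 0 := by nlinarith

private lemma wrap_lt (S Q c : ℝ) (hc : 0 ≤ c) (hch : c < 1/2) (hQ : 0 < Q)
    (hS : S ≤ 2*c*Q) : 2*(S - Q) < 0 := by nlinarith

private lemma sumsq_zero (u0 u1 u2 u3 : ℝ) (h : u0^2+u1^2+u2^2+u3^2 ≤ 0) :
    u0 = 0 ∧ u1 = 0 ∧ u2 = 0 ∧ u3 = 0 := by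
  refine ⟨?_, ?_, ?_, ?_⟩ <;>
    nlinarith [sq_nonneg u0, sq_nonneg u1, sq_nonneg u2, sq_nonneg u3]

set_option maxHeartbeats 1600000 in
theorem lyapunov_decreasing_along_trajectories
    (γ RA1 RA2 RB1 RB2 : ℝ) (hγ : 0 < γ)
    (hA1 : 0 < RA1) (hA1' : RA1 < 2 * γ)
    (hA2 : 0 < RA2) (hA2' : RA2 < 2 * γ)
    (hB1 : 0 < RB1) (hB1' : RB1 < 2 * γ)
    (hB2 : 0 < RB2) (hB2' : RB2 < 2 * γ)
    (q : ℝ → EuclideanSpace ℝ (Fin 4))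
    (hq : ∀ t, HasDerivAt q (stationaryMap γ RA1 RA2 RB1 RB2 (q t) - q t) t) :
    let G := stationaryMap γ RA1 RA2 RB1 RB2
    let V : ℝ → ℝ := fun t => ‖G (q t) - q t‖ ^ 2
    ∀ t : ℝ, deriv V t ≤ 0 ∧ (G (q t) ≠ q t → deriv V t < 0) := by
  intro G V t
  have hGdef : G = stationaryMap γ RA1 RA2 RB1 RB2 := rfl
  -- component derivatives of q
  have hcomp : ∀ i : Fin 4, HasDerivAt (fun s => q s i)
      ((stationaryMap γ RA1 RA2 RB1 RB2 (q t) - q t) i) t := by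
    intro i
    have := ((EuclideanSpace.proj i : EuclideanSpace ℝ (Fin 4) →L[ℝ] ℝ)).hasFDerivAt.comp_hasDerivAt
      t (hq t)
    exact this
  -- abbreviations
  set u0 := (stationaryMap γ RA1 RA2 RB1 RB2 (q t) - q t) 0 with hu0def
  set u1 := (stationaryMap γ RA1 RA2 RB1 RB2 (q t) - q t) 1 with hu1def
  set u2 := (stationaryMap γ RA1 RA2 RB1 RB2 (q t) - q t) 2 with hu2def
  set u3 := (stationaryMap γ RA1 RA2 RB1 RB2 (q t) - q t) 3 with hu3def
  set E0 := Real.exp (q t 0 / γ) with hE0def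
  set E1 := Real.exp (q t 1 / γ) with hE1def
  set E2 := Real.exp (q t 2 / γ) with hE2def
  set E3 := Real.exp (q t 3 / γ) with hE3def
  have hE0 : 0 < E0 := Real.exp_pos _
  have hE1 : 0 < E1 := Real.exp_pos _
  have hE2 : 0 < E2 := Real.exp_pos _
  have hE3 : 0 < E3 := Real.exp_pos _
  have hne01 : E0 + E1 ≠ 0 := (add_pos hE0 hE1).ne'
  have hne23 : E2 + E3 ≠ 0 := (add_pos hE2 hE3).ne'
  have hc0 : HasDerivAt (fun s => q s 0) u0 t := hcomp 0
  have hc1 : HasDerivAt (fun s => q s 1) u1 t := hcomp 1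
  have hc2 : HasDerivAt (fun s => q s 2) u2 t := hcomp 2
  have hc3 : HasDerivAt (fun s => q s 3) u3 t := hcomp 3
  have he0 : HasDerivAt (fun s => Real.exp (q s 0 / γ)) (E0 * (u0 / γ)) t :=
    (hc0.div_const γ).exp
  have he1 : HasDerivAt (fun s => Real.exp (q s 1 / γ)) (E1 * (u1 / γ)) t :=
    (hc1.div_const γ).exp
  have he2 : HasDerivAt (fun s => Real.exp (q s 2 / γ)) (E2 * (u2 / γ)) t :=
    (hc2.div_const γ).exp
  have he3 : HasDerivAt (fun s => Real.exp (q s 3 / γ)) (E3 * (u3 / γ)) t :=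
    (hc3.div_const γ).exp
  -- derivatives of the four coordinate functions of G ∘ q − q
  have hf0 : HasDerivAt
      (fun s => RA1 * Real.exp (q s 3 / γ) / (Real.exp (q s 2 / γ) + Real.exp (q s 3 / γ)) - q s 0)
      ((RA1 * (E3 * (u3 / γ)) * (E2 + E3) - RA1 * E3 * (E2 * (u2 / γ) + E3 * (u3 / γ)))
        / (E2 + E3) ^ 2 - u0) t :=
    (((he3.const_mul RA1).div (he2.add he3) hne23)).sub hc0
  have hf1 : HasDerivAt
      (fun s => RA2 * Real.exp (q s 2 / γ) / (Real.exp (q s 2 / γ) + Real.exp (q s 3 / γ)) - q s 1)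
      ((RA2 * (E2 * (u2 / γ)) * (E2 + E3) - RA2 * E2 * (E2 * (u2 / γ) + E3 * (u3 / γ)))
        / (E2 + E3) ^ 2 - u1) t :=
    (((he2.const_mul RA2).div (he2.add he3) hne23)).sub hc1
  have hf2 : HasDerivAt
      (fun s => RB1 * Real.exp (q s 1 / γ) / (Real.exp (q s 0 / γ) + Real.exp (q s 1 / γ)) - q s 2)
      ((RB1 * (E1 * (u1 / γ)) * (E0 + E1) - RB1 * E1 * (E0 * (u0 / γ) + E1 * (u1 / γ)))
        / (E0 + E1) ^ 2 - u2) t :=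
    (((he1.const_mul RB1).div (he0.add he1) hne01)).sub hc2
  have hf3 : HasDerivAt
      (fun s => RB2 * Real.exp (q s 0 / γ) / (Real.exp (q s 0 / γ) + Real.exp (q s 1 / γ)) - q s 3)
      ((RB2 * (E0 * (u0 / γ)) * (E0 + E1) - RB2 * E0 * (E0 * (u0 / γ) + E1 * (u1 / γ)))
        / (E0 + E1) ^ 2 - u3) t :=
    (((he0.const_mul RB2).div (he0.add he1) hne01)).sub hc3
  -- V as sum of squares
  have hnormsq : ∀ x : EuclideanSpace ℝ (Fin 4),
      ‖x‖^2 = (x 0)^2 + (x 1)^2 + (x 2)^2 + (x 3)^2 := by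
    intro x
    rw [EuclideanSpace.norm_eq, Real.sq_sqrt (by positivity)]
    norm_num [Fin.sum_univ_four, sq_abs]
  have hVeq : V = fun s =>
      (RA1 * Real.exp (q s 3 / γ) / (Real.exp (q s 2 / γ) + Real.exp (q s 3 / γ)) - q s 0) ^ 2 +
      (RA2 * Real.exp (q s 2 / γ) / (Real.exp (q s 2 / γ) + Real.exp (q s 3 / γ)) - q s 1) ^ 2 +
      (RB1 * Real.exp (q s 1 / γ) / (Real.exp (q s 0 / γ) + Real.exp (q s 1 / γ)) - q s 2) ^ 2 +
      (RB2 * Real.exp (q s 0 / γ) / (Real.exp (q s 0 / γ) + Real.exp (q s 1 / γ)) - q s 3) ^ 2 := by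
    funext s
    show ‖G (q s) - q s‖ ^ 2 = _
    rw [hnormsq]
    simp only [hGdef, PiLp.sub_apply]
    rfl
  -- value equalities
  have ev0 : RA1 * Real.exp (q t 3 / γ) / (Real.exp (q t 2 / γ) + Real.exp (q t 3 / γ)) - q t 0 = u0 := by
    rw [hu0def, PiLp.sub_apply]; rfl
  have ev1 : RA2 * Real.exp (q t 2 / γ) / (Real.exp (q t 2 / γ) + Real.exp (q t 3 / γ)) - q t 1 = u1 := by
    rw [hu1def, PiLp.sub_apply]; rfl
  have ev2 : RB1 * Real.exp (q t 1 / γ) / (Real.exp (q t 0 / γ) + Real.exp (q t 1 / γ)) - q t 2 = u2 := by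
    rw [hu2def, PiLp.sub_apply]; rfl
  have ev3 : RB2 * Real.exp (q t 0 / γ) / (Real.exp (q t 0 / γ) + Real.exp (q t 1 / γ)) - q t 3 = u3 := by
    rw [hu3def, PiLp.sub_apply]; rfl
  -- nice forms of the derivatives
  set a := E2 * E3 / (E2 + E3) ^ 2 with hadef
  set b := E0 * E1 / (E0 + E1) ^ 2 with hbdef
  have hd0 : (RA1 * (E3 * (u3 / γ)) * (E2 + E3) - RA1 * E3 * (E2 * (u2 / γ) + E3 * (u3 / γ)))
      / (E2 + E3) ^ 2 = RA1 * a / γ * (u3 - u2) := by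
    rw [hadef]; field_simp; ring
  have hd1 : (RA2 * (E2 * (u2 / γ)) * (E2 + E3) - RA2 * E2 * (E2 * (u2 / γ) + E3 * (u3 / γ)))
      / (E2 + E3) ^ 2 = RA2 * a / γ * (u2 - u3) := by
    rw [hadef]; field_simp; ring
  have hd2 : (RB1 * (E1 * (u1 / γ)) * (E0 + E1) - RB1 * E1 * (E0 * (u0 / γ) + E1 * (u1 / γ)))
      / (E0 + E1) ^ 2 = RB1 * b / γ * (u1 - u0) := by
    rw [hbdef]; field_simp; ring
  have hd3 : (RB2 * (E0 * (u0 / γ)) * (E0 + E1) - RB2 * E0 * (E0 * (u0 / γ) + E1 * (u1 / γ)))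
      / (E0 + E1) ^ 2 = RB2 * b / γ * (u0 - u1) := by
    rw [hbdef]; field_simp; ring
  -- derivative of V
  have hVt := (((hf0.pow 2).add (hf1.pow 2)).add (hf2.pow 2)).add (hf3.pow 2)
  replace hVt := hVt.congr_of_eventuallyEq (f₁ := V) (Filter.Eventually.of_forall fun s => congrFun hVeq s)
  have hD := hVt.deriv
  simp only [show (2-1 : ℕ) = 1 from rfl, pow_one, Nat.cast_ofNat] at hD
  rw [ev0, ev1, ev2, ev3, hd0, hd1, hd2, hd3] at hD
  rw [hD]
  -- bounds on the coefficients
  have ha0 : 0 < a := div_pos (mul_pos hE2 hE3) (pow_pos (add_pos hE2 hE3) 2)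
  have hb0 : 0 < b := div_pos (mul_pos hE0 hE1) (pow_pos (add_pos hE0 hE1) 2)
  have ha4 : a ≤ 1/4 := quarter_bound E2 E3 hE2 hE3
  have hb4 : b ≤ 1/4 := quarter_bound E0 E1 hE0 hE1
  set A1' := RA1 * a / γ with hA1def
  set A2' := RA2 * a / γ with hA2def
  set B1' := RB1 * b / γ with hB1def
  set B2' := RB2 * b / γ with hB2def
  have hA1p : 0 ≤ A1' := (div_pos (mul_pos hA1 ha0) hγ).le
  have hA2p : 0 ≤ A2' := (div_pos (mul_pos hA2 ha0) hγ).le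
  have hB1p : 0 ≤ B1' := (div_pos (mul_pos hB1 hb0) hγ).le
  have hB2p : 0 ≤ B2' := (div_pos (mul_pos hB2 hb0) hγ).le
  have hA1h : A1' < 1/2 := half_bound RA1 γ a hA1 hA1' hγ ha0 ha4
  have hA2h : A2' < 1/2 := half_bound RA2 γ a hA2 hA2' hγ ha0 ha4
  have hB1h : B1' < 1/2 := half_bound RB1 γ b hB1 hB1' hγ hb0 hb4
  have hB2h : B2' < 1/2 := half_bound RB2 γ b hB2 hB2' hγ hb0 hb4
  set Q := u0^2 + u1^2 + u2^2 + u3^2 with hQdef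
  have hQ0 : 0 ≤ Q := by rw [hQdef]; positivity
  set c := max (max A1' A2') (max B1' B2') with hcdef
  have hc0' : 0 ≤ c := le_trans hA1p (le_trans (le_max_left _ _) (le_max_left _ _))
  have hch : c < 1/2 := max_lt (max_lt hA1h hA2h) (max_lt hB1h hB2h)
  have hS := core_bound c A1' A2' B1' B2' u0 u1 u2 u3 hc0'
    hA1p (le_trans (le_max_left _ _) (le_max_left _ _))
    hA2p (le_trans (le_max_right _ _) (le_max_left _ _))
    hB1p (le_trans (le_max_left _ _) (le_max_right _ _))
    hB2p (le_trans (le_max_right _ _) (le_max_right _ _))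
  have hDeq : 2 * u0 * (A1' * (u3 - u2) - u0) + 2 * u1 * (A2' * (u2 - u3) - u1) +
      2 * u2 * (B1' * (u1 - u0) - u2) + 2 * u3 * (B2' * (u0 - u1) - u3) =
      2 * ((A1'*(u0*(u3-u2)) + A2'*(u1*(u2-u3)) + B1'*(u2*(u1-u0)) + B2'*(u3*(u0-u1))) - Q) := by
    rw [hQdef]; ring
  constructor
  · rw [hDeq]
    exact wrap_le _ Q c hc0' hch hQ0 hS
  · intro hne
    have hQpos : 0 < Q := by
      rcases lt_or_ge 0 Q with h | h
      · exact h
      · exfalso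
        obtain ⟨h0, h1, h2, h3⟩ := sumsq_zero u0 u1 u2 u3 h
        apply hne
        rw [hGdef, ← sub_eq_zero]
        ext i
        fin_cases i
        · exact h0
        · exact h1
        · exact h2
        · exact h3
    rw [hDeq]
    exact wrap_lt _ Q c hc0' hch hQpos hS
end

section
/- With G as defined from Boltzmann probabilities and rewards R_{ij} satisfying 0 < R_{ij} < 2γ, every solution of the ODE q̇ = G(q) − q converges as t → ∞ to the unique fixed point q* of G. -/
open Real
open scoped NNReal

noncomputable def sigQ (x : ℝ) : ℝ := (1 + Real.exp (-x))⁻¹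

lemma sigQ_hasDeriv (x : ℝ) :
    HasDerivAt sigQ (Real.exp (-x) / (1 + Real.exp (-x))^2) x := by
  have h : (0:ℝ) < 1 + Real.exp (-x) := by positivity
  have h1 : HasDerivAt (fun y : ℝ => 1 + Real.exp (-y)) (Real.exp (-x) * (-1)) x :=
    ((hasDerivAt_neg x).exp).const_add 1
  have := h1.inv h.ne'
  exact this.congr_deriv (by ring)

lemma sigQ_lipschitz : LipschitzWith (4⁻¹ : ℝ≥0) sigQ := by
  apply lipschitzWith_of_nnnorm_deriv_le
  · exact fun x => (sigQ_hasDeriv x).differentiableAt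
  · intro x
    rw [(sigQ_hasDeriv x).deriv]
    have h : (0:ℝ) < 1 + Real.exp (-x) := by positivity
    have he : (0:ℝ) < Real.exp (-x) := Real.exp_pos _
    rw [← NNReal.coe_le_coe]
    push_cast
    rw [Real.norm_eq_abs, abs_of_nonneg (by positivity)]
    rw [div_le_iff₀ (by positivity)]
    nlinarith [sq_nonneg (1 - Real.exp (-x))]

lemma sigQ_bound (a b : ℝ) : |sigQ a - sigQ b| ≤ |a - b| / 4 := by
  have := sigQ_lipschitz.dist_le_mul a b
  simp only [Real.dist_eq, NNReal.coe_inv] at this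
  push_cast at this
  linarith

lemma frac_eq_sigQ (a b : ℝ) :
    Real.exp a / (Real.exp b + Real.exp a) = sigQ (a - b) := by
  unfold sigQ
  rw [neg_sub, Real.exp_sub, inv_eq_one_div, div_eq_div_iff (by positivity) (by positivity)]
  field_simp
  ring

lemma comp_bound {γ : ℝ} (hγ : 0 < γ) {R : ℝ} (hR : 0 ≤ R) (a b c d : ℝ) :
    |R * Real.exp (a/γ) / (Real.exp (b/γ) + Real.exp (a/γ))
      - R * Real.exp (c/γ) / (Real.exp (d/γ) + Real.exp (c/γ))|
    ≤ R / (4*γ) * (|a - c| + |b - d|) := by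
  rw [mul_div_assoc, mul_div_assoc, frac_eq_sigQ, frac_eq_sigQ, ← mul_sub, abs_mul,
    abs_of_nonneg hR]
  have h1 := sigQ_bound (a/γ - b/γ) (c/γ - d/γ)
  have h2 : |a/γ - b/γ - (c/γ - d/γ)| ≤ (|a - c| + |b - d|)/γ := by
    rw [div_sub_div_same, div_sub_div_same, ← sub_div, abs_div, abs_of_pos hγ]
    gcongr
    calc |a - b - (c - d)| = |(a - c) + (d - b)| := by ring_nf
        _ ≤ |a - c| + |d - b| := abs_add_le _ _
        _ = |a - c| + |b - d| := by rw [abs_sub_comm d b]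

  calc R * |sigQ (a/γ - b/γ) - sigQ (c/γ - d/γ)|
      ≤ R * (((|a - c| + |b - d|)/γ)/4) :=
        mul_le_mul_of_nonneg_left (h1.trans (by linarith)) hR
    _ = R / (4*γ) * (|a - c| + |b - d|) := by
        rw [div_div]; ring


lemma smap_dist_le {γ RA1 RA2 RB1 RB2 : ℝ} (hγ : 0 < γ)
    (hA1 : 0 < RA1) (hA2 : 0 < RA2) (hB1 : 0 < RB1) (hB2 : 0 < RB2)
    (x y : EuclideanSpace ℝ (Fin 4)) :
    dist (stationaryMap γ RA1 RA2 RB1 RB2 x) (stationaryMap γ RA1 RA2 RB1 RB2 y)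
      ≤ (max (max RA1 RA2) (max RB1 RB2) / (2*γ)) * dist x y := by
  set Rm := max (max RA1 RA2) (max RB1 RB2) with hRm
  have hRm0 : 0 < Rm := lt_max_iff.mpr (Or.inl (lt_max_iff.mpr (Or.inl hA1)))
  set K : ℝ := Rm / (2*γ) with hK
  have hK0 : 0 ≤ K := by positivity
  have hdx : ∀ i, dist (x i) (y i) = |x i - y i| := fun i => rfl
  -- componentwise bounds
  have h0 := comp_bound hγ hA1.le (x 3) (x 2) (y 3) (y 2)
  have h1 := comp_bound hγ hA2.le (x 2) (x 3) (y 2) (y 3)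
  have h2 := comp_bound hγ hB1.le (x 1) (x 0) (y 1) (y 0)
  have h3 := comp_bound hγ hB2.le (x 0) (x 1) (y 0) (y 1)
  have key : ∀ (R : ℝ), 0 < R → R ≤ Rm → ∀ s u v : ℝ,
      |s| ≤ R / (4*γ) * (u + v) → 0 ≤ u → 0 ≤ v → s^2 ≤ K^2/2 * (u^2 + v^2) := by
    intro R hR hRle s u v hs hu hv
    have habs : |s| ≤ K/2 * (u + v) := by
      refine hs.trans ?_
      have : R / (4*γ) ≤ Rm / (4*γ) := by gcongr
      have h2' : Rm / (4*γ) = K/2 := by rw [hK]; ring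
      nlinarith [this, h2']
    have := abs_nonneg s
    nlinarith [sq_abs s, sq_nonneg (u - v), sq_nonneg (K*(u+v)), mul_le_mul habs habs (abs_nonneg s) (by positivity : (0:ℝ) ≤ K/2 * (u+v))]
  have sqrtle : ∀ S1 S2 : ℝ, S1 ≤ K^2 * S2 → Real.sqrt S1 ≤ K * Real.sqrt S2 := by
    intro S1 S2 h
    calc Real.sqrt S1 ≤ Real.sqrt (K^2 * S2) := Real.sqrt_le_sqrt h
      _ = K * Real.sqrt S2 := by
          rw [Real.sqrt_mul (by positivity), Real.sqrt_sq hK0]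
  rw [EuclideanSpace.dist_eq, EuclideanSpace.dist_eq]
  apply sqrtle
  simp only [Fin.sum_univ_four, Real.dist_eq, stationaryMap, PiLp.toLp_apply, Matrix.cons_val_zero,
    Matrix.cons_val_one, Matrix.head_cons, Matrix.cons_val_two, Matrix.tail_cons,
    Matrix.cons_val_three, sq_abs]
  have k0 := key RA1 hA1 (le_max_of_le_left (le_max_left _ _)) _ _ _ h0 (abs_nonneg _) (abs_nonneg _)
  have k1 := key RA2 hA2 (le_max_of_le_left (le_max_right _ _)) _ _ _ h1 (abs_nonneg _) (abs_nonneg _)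
  have k2 := key RB1 hB1 (le_max_of_le_right (le_max_left _ _)) _ _ _ h2 (abs_nonneg _) (abs_nonneg _)
  have k3 := key RB2 hB2 (le_max_of_le_right (le_max_right _ _)) _ _ _ h3 (abs_nonneg _) (abs_nonneg _)
  simp only [sq_abs] at k0 k1 k2 k3
  ring_nf at k0 k1 k2 k3 ⊢
  linarith

theorem ode_converges_to_unique_fixed_point
    (γ RA1 RA2 RB1 RB2 : ℝ) (hγ : 0 < γ)
    (hA1 : 0 < RA1) (hA1' : RA1 < 2 * γ)
    (hA2 : 0 < RA2) (hA2' : RA2 < 2 * γ)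
    (hB1 : 0 < RB1) (hB1' : RB1 < 2 * γ)
    (hB2 : 0 < RB2) (hB2' : RB2 < 2 * γ)
    (q : ℝ → EuclideanSpace ℝ (Fin 4))
    (hq : ∀ t, HasDerivAt q (stationaryMap γ RA1 RA2 RB1 RB2 (q t) - q t) t) :
    ∃ qstar : EuclideanSpace ℝ (Fin 4),
      stationaryMap γ RA1 RA2 RB1 RB2 qstar = qstar ∧
      (∀ q' : EuclideanSpace ℝ (Fin 4),
        stationaryMap γ RA1 RA2 RB1 RB2 q' = q' → q' = qstar) ∧
      Filter.Tendsto q Filter.atTop (nhds qstar) := by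
  set G := stationaryMap γ RA1 RA2 RB1 RB2 with hG
  set Rm : ℝ := max (max RA1 RA2) (max RB1 RB2) with hRm
  set K : ℝ := Rm / (2*γ) with hKdef
  have hRm0 : 0 < Rm := lt_max_iff.mpr (Or.inl (lt_max_iff.mpr (Or.inl hA1)))
  have hRmlt : Rm < 2*γ := by
    simp only [hRm, max_lt_iff]
    exact ⟨⟨hA1', hA2'⟩, hB1', hB2'⟩
  have hK0 : 0 ≤ K := by positivity
  have hK1 : K < 1 := by
    rw [hKdef, div_lt_one (by positivity)]
    exact hRmlt
  have hdist : ∀ x y, dist (G x) (G y) ≤ K * dist x y := fun x y =>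
    smap_dist_le hγ hA1 hA2 hB1 hB2 x y
  have hLip : LipschitzWith K.toNNReal G :=
    LipschitzWith.of_dist_le_mul (by
      intro x y
      rw [Real.coe_toNNReal K hK0]
      exact hdist x y)
  have hCW : ContractingWith K.toNNReal G := by
    constructor
    · have : ((K.toNNReal : ℝ≥0) : ℝ) < 1 := by rw [Real.coe_toNNReal K hK0]; exact hK1
      exact_mod_cast this
    · exact hLip
  set qstar := hCW.fixedPoint with hqs
  have hfix : G qstar = qstar := hCW.fixedPoint_isFixedPt
  refine ⟨qstar, hfix, fun q' h => hCW.fixedPoint_unique h, ?_⟩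
  -- convergence
  set p : ℝ → EuclideanSpace ℝ (Fin 4) := fun t => q t - qstar with hpdef
  have hp : ∀ t, HasDerivAt p (G (q t) - q t) t := fun t => (hq t).sub_const qstar
  set v : ℝ → EuclideanSpace ℝ (Fin 4) := fun t => Real.exp t • p t with hvdef
  have hv : ∀ t, HasDerivAt v (Real.exp t • (G (q t) - G qstar)) t := by
    intro t
    have h := (Real.hasDerivAt_exp t).smul (hp t)
    refine h.congr_deriv ?_
    rw [hfix, ← smul_add]
    congr 1
    simp only [hpdef]
    abel
  have hvnorm : ∀ t, ‖v t‖ = Real.exp t * ‖p t‖ := by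
    intro t
    rw [hvdef]
    simp [norm_smul, abs_of_pos (Real.exp_pos t)]
  have hbound : ∀ t, ‖Real.exp t • (G (q t) - G qstar)‖ ≤ K * ‖v t‖ + 0 := by
    intro t
    rw [add_zero, norm_smul, Real.norm_eq_abs, abs_of_pos (Real.exp_pos t), hvnorm t]
    have h1 : ‖G (q t) - G qstar‖ ≤ K * ‖p t‖ := by
      rw [← dist_eq_norm, hpdef]
      simpa [dist_eq_norm] using hdist (q t) qstar
    calc Real.exp t * ‖G (q t) - G qstar‖ ≤ Real.exp t * (K * ‖p t‖) :=
          mul_le_mul_of_nonneg_left h1 (Real.exp_pos t).le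
      _ = K * (Real.exp t * ‖p t‖) := by ring
  have hqcont : Continuous q := continuous_iff_continuousAt.mpr fun t => (hq t).continuousAt
  have hvcont : Continuous v := Real.continuous_exp.smul (hqcont.sub continuous_const)
  have hbd : ∀ b : ℝ, 0 ≤ b → ‖p b‖ ≤ ‖p 0‖ * Real.exp ((K-1)*b) := by
    intro b hb
    have hgr := norm_le_gronwallBound_of_norm_deriv_right_le
      (f := v) (f' := fun t => Real.exp t • (G (q t) - G qstar))
      (δ := ‖v 0‖) (K := K) (ε := 0) (a := 0) (b := b)
      (hvcont.continuousOn)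
      (fun t _ => (hv t).hasDerivWithinAt)
      le_rfl
      (fun t _ => hbound t)
      b (Set.right_mem_Icc.mpr hb)
    rw [sub_zero, gronwallBound_ε0] at hgr
    rw [hvnorm b, hvnorm 0, Real.exp_zero, one_mul] at hgr
    have he : Real.exp ((K-1)*b) * Real.exp b = Real.exp (K*b) := by
      rw [← Real.exp_add]; ring_nf
    nlinarith [Real.exp_pos b, norm_nonneg (p b), norm_nonneg (p 0)]
  have ht1 : Filter.Tendsto (fun t => ‖p 0‖ * Real.exp ((K-1)*t)) Filter.atTop (nhds 0) := by
    have h1 : Filter.Tendsto (fun t : ℝ => (K-1)*t) Filter.atTop Filter.atBot := by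
      have : Filter.Tendsto (fun t : ℝ => (1-K)*t) Filter.atTop Filter.atTop :=
        Filter.Tendsto.const_mul_atTop (by linarith) Filter.tendsto_id
      have h2 := Filter.tendsto_neg_atTop_atBot.comp this
      have heq : (fun t : ℝ => (K-1)*t) = fun t : ℝ => -((1-K)*t) := by
        funext t; ring
      rw [heq]
      exact h2
    have h2 := Real.tendsto_exp_atBot.comp h1
    have h3 := h2.const_mul (‖p 0‖)
    simpa using h3
  have hptend : Filter.Tendsto p Filter.atTop (nhds 0) := by
    rw [tendsto_zero_iff_norm_tendsto_zero]
    refine squeeze_zero' (Filter.Eventually.of_forall fun t => norm_nonneg _) ?_ ht1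
    exact Filter.eventually_atTop.mpr ⟨0, fun b hb => hbd b hb⟩
  have := hptend.add_const qstar
  simpa [hpdef, sub_add_cancel] using this
end
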